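/- Let ψ : ℕ → ℕ, let b > 1, let ε ∈ (0,1), and let n ≥ 1 satisfy ψ(n+1) ≥ b(1-ε)·ψ(n) and n ≤ ε·ψ(n). Suppose (a_1, …, a_n) ∈ ℕ_{≥1}^n satisfies (1-ε)·ψ(n) < ∑_{j=1}^n log a_j < (1+ε)·ψ(n), and a_{n+1} ∈ ℕ_{≥1} satisfies (1-ε)·ψ(n+1) < ∑_{j=1}^{n+1} log a_j < (1+ε)·ψ(n+1). Then log a_{n+1} ≥ (1-ε)·(b(1-ε)²/(1+ε) − 1)·log q_n(a_1, …, a_n). -/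

import Mathlib

open Filter Topology MeasureTheory Set
open scoped ENNReal

/-- The Gauss map `T(x) = 1/x mod 1`, with `T(0) = 0`. -/
noncomputable def gaussMap (x : ℝ) : ℝ := Int.fract x⁻¹

/-- The `n`-th partial quotient (1-indexed): `a₁(x) = ⌊1/x⌋`, `aₙ(x) = a₁(T^[n-1] x)`. -/
noncomputable def cfA (n : ℕ) (x : ℝ) : ℕ := ⌊(gaussMap^[n - 1] x)⁻¹⌋₊

/-- Denominators of convergents: `q₀ = 1`, `q₁ = a₁`, `qₙ = aₙ q_{n-1} + q_{n-2}`
(from the 1-indexed sequence `a` of partial quotients). -/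
def qd (a : ℕ → ℕ) : ℕ → ℕ
  | 0 => 1
  | 1 => a 1
  | n + 2 => a (n + 2) * qd a (n + 1) + qd a n

/-- Numerators of convergents: `p₀ = 0`, `p₁ = 1`, `pₙ = aₙ p_{n-1} + p_{n-2}`. -/
def pd (a : ℕ → ℕ) : ℕ → ℕ
  | 0 => 0
  | 1 => 1
  | n + 2 => a (n + 2) * pd a (n + 1) + pd a n

/-- The cylinder `Iₙ(a₁, …, aₙ) = {x ∈ [0,1) : a₁(x) = a₁, …, aₙ(x) = aₙ}`. -/
noncomputable def cyl (n : ℕ) (a : ℕ → ℕ) : Set ℝ :=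
  {x | x ∈ Set.Ico (0 : ℝ) 1 ∧ ∀ j, 1 ≤ j → j ≤ n → cfA j x = a j}

/-- `E(ψ)`: the set of irrationals in `[0,1)` with `(1/ψ(n)) ∑_{j=1}^n log aⱼ(x) → 1`. -/
noncomputable def Eset (ψ : ℕ → ℕ) : Set ℝ :=
  {x | x ∈ Set.Ico (0 : ℝ) 1 ∧ Irrational x ∧
    Tendsto (fun n => (∑ j ∈ Finset.Icc 1 n, Real.log (cfA j x)) / (ψ n : ℝ))
      atTop (𝓝 1)}

/-- The Riemann zeta function `ζ(t) = ∑_{k≥1} k^{-t}` as a real series. -/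
noncomputable def zetaR (t : ℝ) : ℝ := ∑' (k : ℕ+), (k : ℝ) ^ (-t)

/-- Extend a tuple `(a₁, …, aₙ)` of positive integers to a 1-indexed sequence `ℕ → ℕ`. -/
def seqOf (n : ℕ) (v : Fin n → ℕ+) : ℕ → ℕ :=
  fun j => if h : 1 ≤ j ∧ j ≤ n then (v ⟨j - 1, by omega⟩ : ℕ) else 1
lemma qd_pos (a : ℕ → ℕ) : ∀ n, (∀ j, 1 ≤ j → j ≤ n → 1 ≤ a j) → 1 ≤ qd a n := by
  intro n
  induction n using Nat.twoStepInduction with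
  | zero => intro _; simp [qd]
  | one => intro h; simpa [qd] using h 1 le_rfl le_rfl
  | more m ih _ =>
    intro h
    have h1 := ih (fun j hj hj' => h j hj (by omega))
    simp only [qd]
    omega

lemma qd_mono (a : ℕ → ℕ) (n : ℕ) (h : ∀ j, 1 ≤ j → j ≤ n + 1 → 1 ≤ a j) :
    qd a n ≤ qd a (n + 1) := by
  cases n with
  | zero => simpa [qd] using h 1 le_rfl le_rfl
  | succ m =>
    have := h (m + 2) (by omega) le_rfl
    have := qd_pos a (m + 1) (fun j hj hj' => h j hj (by omega))
    simp only [qd]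
    nlinarith

lemma qd_le_prod (a : ℕ → ℕ) : ∀ n, (∀ j, 1 ≤ j → j ≤ n → 1 ≤ a j) →
    qd a n ≤ ∏ j ∈ Finset.Icc 1 n, (2 * a j) := by
  intro n
  induction n using Nat.twoStepInduction with
  | zero => intro _; simp [qd]
  | one => intro h; simp [qd]; omega
  | more m ih0 ih1 =>
    intro h
    have hmono := qd_mono a m (fun j hj hj' => h j hj (by omega))
    have h1 := ih1 (fun j hj hj' => h j hj (by omega))
    have ha2 := h (m + 2) (by omega) le_rfl
    have hprod : ∏ j ∈ Finset.Icc 1 (m + 2), (2 * a j)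
        = (2 * a (m + 2)) * ∏ j ∈ Finset.Icc 1 (m + 1), (2 * a j) := by
      rw [Finset.prod_Icc_succ_top (by omega), mul_comm]
    rw [hprod]
    simp only [qd]
    calc a (m + 2) * qd a (m + 1) + qd a m
        ≤ a (m + 2) * qd a (m + 1) + qd a (m + 1) := by omega
      _ = (a (m + 2) + 1) * qd a (m + 1) := by ring
      _ ≤ (2 * a (m + 2)) * qd a (m + 1) := by
          apply Nat.mul_le_mul_right; omega
      _ ≤ (2 * a (m + 2)) * ∏ j ∈ Finset.Icc 1 (m + 1), (2 * a j) :=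
          Nat.mul_le_mul_left _ h1

/-- lower bound on `log a_{n+1}` in terms of `log qₙ` for tuples in
`Dₙ(ε)` extending into `D_{n+1}(ε)`, along indices with `ψ(n+1) ≥ b(1-ε)ψ(n)` and
`n ≤ ε ψ(n)`. -/
theorem log_a_succ_ge (ψ : ℕ → ℕ) (b ε : ℝ) (hb : 1 < b) (hε : ε ∈ Set.Ioo (0 : ℝ) 1)
    (n : ℕ) (hn : 1 ≤ n)
    (hpsi1 : b * (1 - ε) * (ψ n : ℝ) ≤ (ψ (n + 1) : ℝ))
    (hpsi2 : (n : ℝ) ≤ ε * (ψ n : ℝ))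
    (a : ℕ → ℕ) (ha : ∀ j, 1 ≤ j → j ≤ n + 1 → 1 ≤ a j)
    (hlo : (1 - ε) * (ψ n : ℝ) < ∑ j ∈ Finset.Icc 1 n, Real.log (a j))
    (hhi : ∑ j ∈ Finset.Icc 1 n, Real.log (a j) < (1 + ε) * (ψ n : ℝ))
    (hlo' : (1 - ε) * (ψ (n + 1) : ℝ) < ∑ j ∈ Finset.Icc 1 (n + 1), Real.log (a j))
    (hhi' : ∑ j ∈ Finset.Icc 1 (n + 1), Real.log (a j) < (1 + ε) * (ψ (n + 1) : ℝ)) :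
    (1 - ε) * (b * (1 - ε) ^ 2 / (1 + ε) - 1) * Real.log (qd a n) ≤
      Real.log (a (n + 1)) := by
  obtain ⟨hε0, hε1⟩ := hε
  have ha' : ∀ j, 1 ≤ j → j ≤ n → 1 ≤ a j := fun j hj hj' => ha j hj (by omega)
  -- split the sum
  have hsplit : ∑ j ∈ Finset.Icc 1 (n + 1), Real.log (a j)
      = (∑ j ∈ Finset.Icc 1 n, Real.log (a j)) + Real.log (a (n + 1)) :=
    Finset.sum_Icc_succ_top (by omega) _
  have hψn : (0 : ℝ) ≤ (ψ n : ℝ) := Nat.cast_nonneg _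
  set S := ∑ j ∈ Finset.Icc 1 n, Real.log (a j) with hS
  -- log q bound
  have hqpos : (1 : ℝ) ≤ (qd a n : ℝ) := by exact_mod_cast qd_pos a n ha'
  have hqprod : (qd a n : ℝ) ≤ ∏ j ∈ Finset.Icc 1 n, (2 * (a j : ℝ)) := by
    have := qd_le_prod a n ha'
    push_cast
    exact_mod_cast this
  have hlogq : Real.log (qd a n) ≤ (n : ℝ) * Real.log 2 + S := by
    calc Real.log (qd a n) ≤ Real.log (∏ j ∈ Finset.Icc 1 n, (2 * (a j : ℝ))) :=
          Real.log_le_log (by linarith) hqprod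
      _ = ∑ j ∈ Finset.Icc 1 n, Real.log (2 * (a j : ℝ)) := by
          rw [Real.log_prod]
          intro j hj
          simp only [Finset.mem_Icc] at hj
          have := ha' j hj.1 hj.2
          positivity
      _ = ∑ j ∈ Finset.Icc 1 n, (Real.log 2 + Real.log (a j)) := by
          apply Finset.sum_congr rfl
          intro j hj
          simp only [Finset.mem_Icc] at hj
          have := ha' j hj.1 hj.2
          rw [Real.log_mul (by norm_num) (by exact_mod_cast Nat.one_le_iff_ne_zero.mp this)]
      _ = (n : ℝ) * Real.log 2 + S := by
          rw [Finset.sum_add_distrib, Finset.sum_const, Nat.card_Icc]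
          simp [hS]
  have hlog2 : Real.log 2 < 1 := by
    have := Real.log_two_lt_d9
    linarith
  have hlogq2 : Real.log (qd a n) ≤ (1 + ε) / (1 - ε) * (ψ n : ℝ) := by
    have h1 : (n : ℝ) * Real.log 2 ≤ ε * (ψ n : ℝ) := by
      have hn0 : (0:ℝ) ≤ (n:ℝ) := Nat.cast_nonneg _
      have hl20 : 0 ≤ Real.log 2 := Real.log_nonneg (by norm_num)
      nlinarith
    have h2 : (1 + 2*ε) * (ψ n : ℝ) ≤ (1 + ε) / (1 - ε) * (ψ n : ℝ) := by
      rw [div_mul_eq_mul_div, le_div_iff₀ (by linarith)]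
      nlinarith
    linarith
  have hlogq0 : 0 ≤ Real.log (qd a n) := Real.log_nonneg hqpos
  have hloga : (1 - ε) * (ψ (n+1) : ℝ) - (1 + ε) * (ψ n : ℝ) < Real.log (a (n + 1)) := by
    rw [hsplit] at hlo'
    linarith
  set d := b * (1 - ε) ^ 2 / (1 + ε) - 1 with hd
  clear_value d
  rcases le_or_gt d 0 with hdle | hdpos
  · have hc : (1 - ε) * d * Real.log (qd a n) ≤ 0 := by
      have : (1 - ε) * d ≤ 0 := mul_nonpos_of_nonneg_of_nonpos (by linarith) hdle
      exact mul_nonpos_of_nonpos_of_nonneg this hlogq0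
    have : (0:ℝ) ≤ Real.log (a (n+1)) := by
      have := ha (n+1) (by omega) le_rfl
      exact Real.log_nonneg (by exact_mod_cast this)
    linarith
  · have key : (1 - ε) * d * Real.log (qd a n)
        ≤ (1 - ε) * d * ((1 + ε) / (1 - ε) * (ψ n : ℝ)) := by
      apply mul_le_mul_of_nonneg_left hlogq2
      nlinarith
    have e0 : (1 - ε) * ((1 + ε) / (1 - ε)) = 1 + ε := by
      rw [mul_div_assoc']
      exact mul_div_cancel_left₀ _ (by linarith)
    have e1 : (1 - ε) * d * ((1 + ε) / (1 - ε) * (ψ n : ℝ))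
        = (d * (1 + ε)) * (ψ n : ℝ) := by
      calc (1 - ε) * d * ((1 + ε) / (1 - ε) * (ψ n : ℝ))
          = d * ((1 - ε) * ((1 + ε) / (1 - ε))) * (ψ n : ℝ) := by ring
        _ = (d * (1 + ε)) * (ψ n : ℝ) := by rw [e0]
    have e2 : d * (1 + ε) = b * (1 - ε)^2 - (1 + ε) := by
      rw [hd]
      field_simp
    have heq : (1 - ε) * d * ((1 + ε) / (1 - ε) * (ψ n : ℝ))
        = (b * (1 - ε)^2 - (1 + ε)) * (ψ n : ℝ) := by rw [e1, e2]
    have hfin : (b * (1 - ε)^2 - (1 + ε)) * (ψ n : ℝ)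
        ≤ (1 - ε) * (ψ (n+1) : ℝ) - (1 + ε) * (ψ n : ℝ) := by
      nlinarith
    linarith [key, heq ▸ key]
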